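/- Let A be a C*-algebra and c ∈ A. For any projection p in the hereditary subalgebra closure(c A c*), there exists a projection q in closure(c* A c) such that p is Murray-von Neumann equivalent to q. -/

import Mathlib

open Matrix
open scoped ComplexOrder

noncomputable section
section aux
open scoped NNReal

lemma commute_cfc_cplx {B : Type*} [CStarAlgebra B] {a b : B} (h1 : Commute b a)
    (h2 : Commute b (star a)) (f : ℂ → ℂ) : Commute b (cfc f a) := by
  refine cfc_cases (fun x => Commute b x) a f (Commute.zero_right b) fun hf ha => ?_
  induction (⟨_, hf.restrict⟩ : C(spectrum ℂ a, ℂ)) using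
      ContinuousMap.induction_on_of_compact with
  | const r =>
    have : (ContinuousMap.const (spectrum ℂ a) r) = algebraMap ℂ C(spectrum ℂ a, ℂ) r := rfl
    rw [this, AlgHomClass.commutes]
    exact (Algebra.commutes r b).symm
  | id => rw [cfcHom_id ha]; exact h1
  | star_id => rw [StarHomClass.map_star, cfcHom_id ha]; exact h2
  | add f g hf hg => rw [_root_.map_add]; exact hf.add_right hg
  | mul f g hf hg => rw [_root_.map_mul]; exact hf.mul_right hg
  | frequently f hfreq =>
    have hcl : IsClosed {g : C(spectrum ℂ a, ℂ) | Commute b (cfcHom ha g)} := by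
      apply isClosed_eq
      · exact continuous_mul_left b |>.comp (cfcHom_isClosedEmbedding ha).continuous
      · exact continuous_mul_right b |>.comp (cfcHom_isClosedEmbedding ha).continuous
    exact hcl.closure_subset (mem_closure_iff_frequently.mpr hfreq)

lemma commute_cfc_nnreal {B : Type*} [CStarAlgebra B] [PartialOrder B] [StarOrderedRing B]
    {a b : B} (ha : 0 ≤ a) (h1 : Commute b a) (f : ℝ≥0 → ℝ≥0) : Commute b (cfc f a) := by
  have hsa : IsSelfAdjoint a := .of_nonneg ha
  rw [cfc_nnreal_eq_real f a ha, cfc_real_eq_complex _ hsa]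
  exact commute_cfc_cplx h1 (hsa.symm ▸ h1) _

end aux

/-- A projection in a `*`-algebra: a selfadjoint idempotent. -/
def IsProjectionElem {A : Type*} [Mul A] [Star A] (p : A) : Prop :=
  star p = p ∧ p * p = p

/-- Murray-von Neumann equivalence of projections. -/
def MvNEquiv {A : Type*} [Mul A] [Star A] (p q : A) : Prop :=
  ∃ v : A, star v * v = p ∧ v * star v = q

/-- `p` is Murray-von Neumann equivalent to a subprojection of `q`. -/
def MvNSubEquiv {A : Type*} [Mul A] [Star A] (p q : A) : Prop :=
  ∃ v : A, star v * v = p ∧ q * (v * star v) = v * star v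

/-- The hereditary subalgebra generated by `x`: the closure of `x A x`. -/
def herSub {A : Type*} [Mul A] [TopologicalSpace A] (x : A) : Set A :=
  closure {y : A | ∃ a : A, y = x * a * x}

/-- `p` is Murray-von Neumann equivalent to a projection in the hereditary
subalgebra generated by `x`. -/
def MvNInHer {A : Type*} [Mul A] [Star A] [TopologicalSpace A] (p x : A) : Prop :=
  ∃ q : A, IsProjectionElem q ∧ q ∈ herSub x ∧ MvNEquiv p q

set_option maxHeartbeats 1000000 in
/-- Any projection in `closure (c A c*)` is Murray-von Neumann equivalent to a
projection in `closure (c* A c)`. -/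
theorem exists_mvnEquiv_in_switch (A : Type*) [NonUnitalCStarAlgebra A] (c p : A)
    (hp : IsProjectionElem p)
    (hmem : p ∈ closure {y : A | ∃ a : A, y = c * a * star c}) :
    ∃ q : A, IsProjectionElem q ∧ q ∈ closure {y : A | ∃ a : A, y = star c * a * c} ∧
      MvNEquiv p q := by
  obtain ⟨hps, hpm⟩ := hp
  -- norm of p at most 1
  have hpnorm : ‖p‖ ≤ 1 := by
    have h1 : ‖p‖ * ‖p‖ = ‖p‖ := by
      rw [← CStarRing.norm_star_mul_self, hps, hpm]
    nlinarith [norm_nonneg p]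
  -- approximant
  rw [Metric.mem_closure_iff] at hmem
  obtain ⟨w, hw, hdist⟩ := hmem (1/2) (by norm_num)
  obtain ⟨a, rfl⟩ := hw
  rw [dist_eq_norm] at hdist
  set x₀ : A := p * (c * a * star c) * p with hx₀def
  have hx₀norm : ‖p - x₀‖ < 1/2 := by
    have e1 : p - x₀ = p * (p - c * a * star c) * p := by
      simp only [mul_sub, sub_mul, hpm, hx₀def]
    calc ‖p - x₀‖ = ‖p * (p - c * a * star c) * p‖ := by rw [e1]
      _ ≤ ‖p * (p - c * a * star c)‖ * ‖p‖ := norm_mul_le _ _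
      _ ≤ ‖p‖ * ‖p - c * a * star c‖ * ‖p‖ :=
          mul_le_mul_of_nonneg_right (norm_mul_le _ _) (norm_nonneg _)
      _ ≤ ‖p - c * a * star c‖ := by
          have h2 : ‖p‖ * ‖p - c * a * star c‖ ≤ ‖p - c * a * star c‖ :=
            mul_le_of_le_one_left (norm_nonneg _) hpnorm
          have h3 : ‖p‖ * ‖p - c * a * star c‖ * ‖p‖ ≤ ‖p‖ * ‖p - c * a * star c‖ :=
            mul_le_of_le_one_right (mul_nonneg (norm_nonneg _) (norm_nonneg _)) hpnorm
          linarith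
      _ < 1/2 := hdist
  -- small algebra facts in A
  have hx1 : p * x₀ = x₀ := by simp only [hx₀def, ← mul_assoc, hpm]
  have hx2 : x₀ * p = x₀ := by rw [hx₀def, mul_assoc, hpm]
  have hbm : x₀ = (p * c) * (a * star c * p) := by simp only [hx₀def, mul_assoc]
  -- move to the unitization
  let Au := Unitization ℂ A
  let P : Au := p
  let C : Au := c
  have hPs : star P = P := by rw [← Unitization.inr_star, hps]
  have hPP : P * P = P := by rw [← Unitization.inr_mul, hpm]
  have hP0 : (0 : Au) ≤ P := by
    have := star_mul_self_nonneg P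
    rwa [hPs, hPP] at this
  have h1P : (0 : Au) ≤ 1 - P := by
    have := star_mul_self_nonneg (1 - P)
    have e : star (1 - P) * (1 - P) = 1 - P := by
      rw [_root_.star_sub, _root_.star_one, hPs, sub_mul, mul_sub, mul_sub, hPP, one_mul, mul_one, one_mul]
      abel
    rwa [e] at this
  -- the invertible element y
  have htnorm : ‖((p - x₀ : A) : Au)‖ < 1 := by
    rw [Unitization.norm_inr]; linarith
  set Y : Auˣ := Units.oneSub _ htnorm with hYdef
  have hYval : (Y : Au) = 1 - ((p - x₀ : A) : Au) := rfl
  set z : Au := ↑Y⁻¹ with hzdef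
  have hYz : (Y : Au) * z = 1 := Y.mul_inv
  -- P * Y = x₀
  have hPXu : P * ((x₀ : A) : Au) = ((x₀ : A) : Au) := by rw [← Unitization.inr_mul, hx1]
  have hPy : P * (Y : Au) = ((x₀ : A) : Au) := by
    rw [hYval, Unitization.inr_sub, mul_sub, mul_sub, mul_one, hPP, hPXu]
    abel
  -- generic sandwich identity
  have habs : ∀ aa ww : Au, aa * (ww * star ww) * star aa = (aa * ww) * star (aa * ww) := by
    intro aa ww
    rw [StarMul.star_mul]
    simp only [mul_assoc]
  -- first inequality: P ≤ α • (x₀ * x₀*)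
  set Xu : Au := ((x₀ : A) : Au) with hXudef
  have hzz : IsSelfAdjoint (z * star z) := .mul_star_self z
  have ineq1 : P ≤ ‖z * star z‖ • (Xu * star Xu) := by
    have conj := CStarAlgebra.star_right_conjugate_le_norm_smul (a := P * (Y : Au)) (b := z * star z) hzz
    have lhs_eq : (P * (Y : Au)) * (z * star z) * star (P * (Y : Au)) = P := by
      rw [habs]
      have : P * (Y : Au) * z = P := by rw [mul_assoc, hYz, mul_one]
      rw [mul_assoc P (Y : Au) z, ← mul_assoc, this, hPs, hPP]
    have rhs_eq : (P * (Y : Au)) * star (P * (Y : Au)) = Xu * star Xu := by rw [hPy]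
    rw [lhs_eq, rhs_eq] at conj
    exact conj
  -- second inequality: Xu * star Xu ≤ β • H
  set Bu : Au := ((p * c : A) : Au) with hBudef
  set Mu : Au := ((a * star c * p : A) : Au) with hMudef
  set H : Au := Bu * star Bu with hHdef
  have hXuBM : Xu = Bu * Mu := by rw [hXudef, hBudef, hMudef, ← Unitization.inr_mul, ← hbm]
  have ineq2 : Xu * star Xu ≤ ‖Mu * star Mu‖ • H := by
    have conj := CStarAlgebra.star_right_conjugate_le_norm_smul (a := Bu) (b := Mu * star Mu)
      (.mul_star_self Mu)
    rw [habs, ← hXuBM] at conj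
    exact conj
  -- combine: P ≤ γ' • H with γ' > 0
  have hH0 : (0 : Au) ≤ H := mul_star_self_nonneg Bu
  set γ : ℝ := ‖z * star z‖ * ‖Mu * star Mu‖ + 1 with hγdef
  have hγpos : 0 < γ := by positivity
  have hPH : P ≤ γ • H := by
    calc P ≤ ‖z * star z‖ • (Xu * star Xu) := ineq1
      _ ≤ ‖z * star z‖ • (‖Mu * star Mu‖ • H) :=
          smul_le_smul_of_nonneg_left ineq2 (norm_nonneg _)
      _ = (‖z * star z‖ * ‖Mu * star Mu‖) • H := by rw [smul_smul]
      _ ≤ γ • H := by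
          refine smul_le_smul_of_nonneg_right ?_ hH0
          rw [hγdef]; linarith
  have hεPH : γ⁻¹ • P ≤ H := by
    have := smul_le_smul_of_nonneg_left hPH (le_of_lt (inv_pos.mpr hγpos))
    rwa [smul_smul, inv_mul_cancel₀ (ne_of_gt hγpos), one_smul] at this
  -- the invertible positive element u
  set u : Au := H + (1 - P) with hudef
  set δ : ℝ := min γ⁻¹ 1 with hδdef
  have hδpos : 0 < δ := lt_min (inv_pos.mpr hγpos) one_pos
  have hδ1 : δ • (1 : Au) ≤ u := by
    have e : δ • (1 : Au) = δ • P + δ • (1 - P) := by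
      rw [← smul_add]
      congr 1
      abel
    rw [e, hudef]
    refine add_le_add ?_ ?_
    · calc δ • P ≤ γ⁻¹ • P := smul_le_smul_of_nonneg_right (min_le_left _ _) hP0
        _ ≤ H := hεPH
    · calc δ • (1 - P) ≤ (1 : ℝ) • (1 - P) := smul_le_smul_of_nonneg_right (min_le_right _ _) h1P
        _ = 1 - P := one_smul _ _
  have hδunit : IsUnit (δ • (1 : Au)) := by
    rw [← Algebra.algebraMap_eq_smul_one]
    exact (isUnit_iff_ne_zero.mpr (ne_of_gt hδpos)).map (algebraMap ℝ Au)
  have hδ0 : (0 : Au) ≤ δ • 1 := smul_nonneg hδpos.le zero_le_one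
  have hu : IsUnit u := CStarAlgebra.isUnit_of_le _ hδ1 (hδunit.isStrictlyPositive hδ0)
  have hu0 : (0 : Au) ≤ u := hδ0.trans hδ1
  -- commutation relations of u with P
  have hPH' : P * H = H := by
    rw [hHdef, hBudef, ← mul_assoc, ← Unitization.inr_mul]
    rw [show p * (p * c) = p * c from by rw [← mul_assoc, hpm]]
  have hHP' : H * P = H := by
    have : star Bu * P = star Bu := by
      rw [hBudef, ← Unitization.inr_star, ← Unitization.inr_mul]
      rw [show star (p * c) * p = star (p * c) from by
        rw [StarMul.star_mul, hps, mul_assoc, hpm]]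
    rw [hHdef, mul_assoc, this]
  have hPu : P * u = H := by
    rw [hudef, mul_add, hPH', mul_sub, mul_one, hPP, sub_self, add_zero]
  have huP : u * P = H := by
    rw [hudef, add_mul, hHP', sub_mul, one_mul, hPP, sub_self, add_zero]
  have hcommPu : Commute P u := by rw [Commute, SemiconjBy, hPu, huP]
  -- k = u ^ (-1/2)
  set k : Au := u ^ (-(1/2) : ℝ) with hkdef
  have hk0 : (0 : Au) ≤ k := CFC.rpow_nonneg
  have hks : star k = k := IsSelfAdjoint.of_nonneg hk0
  have hkuk : k * u * k = 1 := CFC.conjugate_rpow_neg_one_half u (hu.isStrictlyPositive hu0)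
  have hcommPk : Commute P k := by
    rw [hkdef, CFC.rpow_def]
    exact commute_cfc_nnreal hu0 hcommPu _
  -- the key identity k * H * k = P
  have khk : k * H * k = P := by
    calc k * H * k = k * (u * P) * k := by rw [huP]
      _ = k * u * (P * k) := by simp only [mul_assoc]
      _ = k * u * (k * P) := by rw [hcommPk]
      _ = k * u * k * P := by simp only [mul_assoc]
      _ = P := by rw [hkuk, one_mul]
  -- express H as P (C C*) P
  have hS2 : k * P = P * k := hcommPk.eq.symm
  have hHPCP : H = P * (C * star C) * P := by
    rw [hHdef, hBudef, Unitization.inr_mul, StarMul.star_mul, hPs]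
    simp only [mul_assoc]
    rfl
  have key1 : (k * P) * (C * star C) * (k * P) = P := by
    have e1 : (k * P) * (C * star C) * (k * P) = (k * P) * (C * star C) * (P * k) := by
      nth_rw 2 [hS2]
    have e2 : (k * P) * (C * star C) * (P * k) = k * (P * (C * star C) * P) * k := by
      simp only [mul_assoc]
    rw [e1, e2, ← hHPCP, khk]
  -- descend to A
  have hSfst : (k * P).fst = 0 := by
    rw [Unitization.fst_mul]
    simp [P]
  set s : A := (k * P).snd with hsdef
  have hs : ((s : A) : Au) = k * P := by
    conv_rhs => rw [← Unitization.inl_fst_add_inr_snd_eq (k * P)]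
    rw [hSfst]
    simp
    rfl
  have hssA : star s = s := by
    apply Unitization.inr_injective (R := ℂ)
    rw [Unitization.inr_star, hs, StarMul.star_mul, hks, hPs]
    exact hS2.symm
  have F1 : s * (c * star c) * s = p := by
    apply Unitization.inr_injective (R := ℂ)
    simp only [Unitization.inr_mul, Unitization.inr_star, hs]
    exact key1
  have F2 : p * s = s := by
    apply Unitization.inr_injective (R := ℂ)
    simp only [Unitization.inr_mul, hs]
    show P * (k * P) = k * P
    rw [← mul_assoc, ← hS2, mul_assoc, hPP]
  have F1w : ∀ w : A, s * (c * (star c * (s * w))) = p * w := by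
    intro w
    have h := congrArg (· * w) F1
    simp only [mul_assoc] at h
    exact h
  -- the final witnesses
  refine ⟨star c * (s * s) * c, ⟨?_, ?_⟩, ?_, star c * s, ?_, ?_⟩
  · -- star q = q
    simp only [StarMul.star_mul, _root_.star_star, hssA, mul_assoc]
  · -- q * q = q
    simp only [mul_assoc]
    rw [F1w (s * c), ← mul_assoc p s c, F2]
  · -- membership
    exact subset_closure ⟨s * s, rfl⟩
  · -- star v * v = p
    simp only [StarMul.star_mul, _root_.star_star, hssA]
    simp only [mul_assoc] at F1 ⊢
    exact F1
  · -- v * star v = q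
    simp only [StarMul.star_mul, _root_.star_star, hssA, mul_assoc]
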